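/- For prime powers q = 2^l with l ≥ 3, the punctured quantum Reed-Solomon construction with k = m = ⌊q/3⌋ and s = q/4 yields a CSS qudit code with parameters [[3q/4, q/4, ⌊q/3⌋ - q/4 + 1]]_q: block length q - s = 3q/4, dimension k - m + s = q/4, and distance at least min(q-k, m) - s + 1. -/

import Mathlib

open Polynomial

/-- The punctured Reed–Solomon code `C1`: evaluations on `M = F_q \ B` of polynomials of
degree `< k`. -/
def C1code {F : Type*} [Field F] [Fintype F] [DecidableEq F] (B : Finset F) (k : ℕ) :
    Set ({x : F // x ∉ B} → F) :=
  {c | ∃ p ∈ Polynomial.degreeLT F k, ∀ x, c x = p.eval x.1}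

/-- The code `C2⊥`: evaluations on `M = F_q \ B` of polynomials of degree `< m` vanishing
on `B`. -/
def C2perpCode {F : Type*} [Field F] [Fintype F] [DecidableEq F] (B : Finset F) (m : ℕ) :
    Set ({x : F // x ∉ B} → F) :=
  {c | ∃ p ∈ Polynomial.degreeLT F m, (∀ b ∈ B, p.eval b = 0) ∧ ∀ x, c x = p.eval x.1}

/-- The dual code with respect to the standard bilinear form on `F_q^M`. -/
def dualCode {F : Type*} [Field F] [Fintype F] [DecidableEq F] {B : Finset F}
    (C : Set ({x : F // x ∉ B} → F)) : Set ({x : F // x ∉ B} → F) :=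
  {c | ∀ d ∈ C, ∑ x, c x * d x = 0}

namespace QRSaux

open Finset

set_option linter.unusedSectionVars false


variable {F : Type*} [Field F] [Fintype F] [DecidableEq F]

/-- The vanishing polynomial of `B`. -/
noncomputable def ZB (B : Finset F) : F[X] := ∏ b ∈ B, (X - C b)

lemma ZB_ne_zero (B : Finset F) : ZB B ≠ 0 :=
  prod_ne_zero_iff.mpr fun b _ => X_sub_C_ne_zero b

lemma ZB_natDegree (B : Finset F) : (ZB B).natDegree = B.card := by
  rw [ZB, natDegree_prod _ _ fun b _ => X_sub_C_ne_zero b]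
  simp

lemma ZB_eval_zero {B : Finset F} {b : F} (hb : b ∈ B) : (ZB B).eval b = 0 := by
  rw [ZB, eval_prod]
  exact prod_eq_zero hb (by simp)

lemma ZB_eval_ne_zero {B : Finset F} {x : F} (hx : x ∉ B) : (ZB B).eval x ≠ 0 := by
  rw [ZB, eval_prod]
  refine prod_ne_zero_iff.mpr fun b hb => ?_
  simp only [eval_sub, eval_X, eval_C]
  exact sub_ne_zero.mpr fun h => hx (h ▸ hb)

lemma ZB_dvd {B : Finset F} {p : F[X]} (h : ∀ b ∈ B, p.eval b = 0) : ZB B ∣ p := by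
  refine Finset.prod_dvd_of_coprime (fun a ha b hb hab => ?_) fun b hb => ?_
  · exact (Polynomial.pairwise_coprime_X_sub_C Function.injective_id) hab
  · exact dvd_iff_isRoot.mpr (h b hb)


lemma eval_eq_of_degreeLT {B : Finset F} {d : ℕ} (hd : d ≤ Fintype.card {x : F // x ∉ B})
    {p q : F[X]} (hp : p ∈ degreeLT F d) (hq : q ∈ degreeLT F d)
    (h : ∀ x : {x : F // x ∉ B}, p.eval x.1 = q.eval x.1) : p = q := by
  rcases eq_or_ne (p - q) 0 with h' | h'
  · exact sub_eq_zero.mp h'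
  · exfalso
    apply h'
    apply Polynomial.eq_zero_of_natDegree_lt_card_of_eval_eq_zero _
      (Subtype.val_injective (p := fun x => x ∉ B))
      (fun i => by simp [h i])
    have hdeg : (p - q).degree < (d : WithBot ℕ) :=
      mem_degreeLT.mp (Submodule.sub_mem _ hp hq)
    exact lt_of_lt_of_le ((natDegree_lt_iff_degree_lt h').mpr hdeg) hd

lemma hammingNorm_eq {B : Finset F} (c : {x : F // x ∉ B} → F) :
    hammingNorm c = (univ.filter fun i => c i ≠ 0).card := rfl

lemma zero_mem_C2perp (B : Finset F) (m : ℕ) : (0 : {x : F // x ∉ B} → F) ∈ C2perpCode B m :=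
  ⟨0, Submodule.zero_mem _, fun _ _ => eval_zero, fun _ => by simp⟩

lemma card_C1 {B : Finset F} {k : ℕ} (hk : k ≤ Fintype.card {x : F // x ∉ B}) :
    Nat.card (C1code B k) = Fintype.card F ^ k := by
  have e1 : degreeLT F k ≃ C1code B k := by
    refine Equiv.ofBijective
      (fun p => ⟨fun x => p.1.eval x.1, p.1, p.2, fun _ => rfl⟩) ⟨?_, ?_⟩
    · intro p q hpq
      have h2 := congrArg Subtype.val hpq
      exact Subtype.ext (eval_eq_of_degreeLT hk p.2 q.2 fun x => congrFun h2 x)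
    · rintro ⟨c, p, hp, hc⟩
      exact ⟨⟨p, hp⟩, Subtype.ext (funext fun x => (hc x).symm)⟩
  rw [← Nat.card_congr e1, Nat.card_congr (degreeLTEquiv F k).toEquiv]
  simp [Nat.card_eq_fintype_card]

lemma card_C2perp {B : Finset F} {m : ℕ} (hsm : B.card ≤ m)
    (hm : m - B.card ≤ Fintype.card {x : F // x ∉ B}) :
    Nat.card (C2perpCode B m) = Fintype.card F ^ (m - B.card) := by
  have hmem : ∀ r : F[X], r ∈ degreeLT F (m - B.card) → ZB B * r ∈ degreeLT F m := by
    intro r hr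
    rcases eq_or_ne r 0 with rfl | hr0
    · rw [mul_zero]; exact Submodule.zero_mem _
    · rw [mem_degreeLT,
        ← natDegree_lt_iff_degree_lt (mul_ne_zero (ZB_ne_zero B) hr0),
        natDegree_mul (ZB_ne_zero B) hr0, ZB_natDegree]
      have : r.natDegree < m - B.card :=
        (natDegree_lt_iff_degree_lt hr0).mpr (mem_degreeLT.mp hr)
      omega
  have e1 : degreeLT F (m - B.card) ≃ C2perpCode B m := by
    refine Equiv.ofBijective (fun r => ⟨fun x => (ZB B * r.1).eval x.1,
      ZB B * r.1, hmem r.1 r.2, fun b hb => by simp [ZB_eval_zero hb], fun _ => rfl⟩)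
      ⟨?_, ?_⟩
    · intro r r' h
      have h2 := congrArg Subtype.val h
      refine Subtype.ext (eval_eq_of_degreeLT hm r.2 r'.2 fun x => ?_)
      have hx : (ZB B).eval x.1 * r.1.eval x.1 = (ZB B).eval x.1 * r'.1.eval x.1 := by
        simpa [eval_mul] using congrFun h2 x
      exact mul_left_cancel₀ (ZB_eval_ne_zero x.2) hx
    · rintro ⟨c, p, hp, hpB, hc⟩
      obtain ⟨r, rfl⟩ := ZB_dvd hpB
      refine ⟨⟨r, ?_⟩, Subtype.ext (funext fun x => (hc x).symm)⟩
      rcases eq_or_ne r 0 with rfl | hr0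
      · exact Submodule.zero_mem _
      · have hpne : ZB B * r ≠ 0 := mul_ne_zero (ZB_ne_zero B) hr0
        have hlt := (natDegree_lt_iff_degree_lt hpne).mpr (mem_degreeLT.mp hp)
        rw [natDegree_mul (ZB_ne_zero B) hr0, ZB_natDegree] at hlt
        rw [mem_degreeLT, ← natDegree_lt_iff_degree_lt hr0]
        omega
  rw [← Nat.card_congr e1, Nat.card_congr (degreeLTEquiv F (m - B.card)).toEquiv]
  simp [Nat.card_eq_fintype_card]

lemma hammingNorm_C1 {B : Finset F} {k : ℕ} {c : {x : F // x ∉ B} → F}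
    (hc : c ∈ C1code B k) (hc0 : c ≠ 0) :
    Fintype.card {x : F // x ∉ B} - (k - 1) ≤ hammingNorm c := by
  obtain ⟨p, hp, hpc⟩ := hc
  have hp0 : p ≠ 0 := by
    rintro rfl; exact hc0 (funext fun x => by simpa using hpc x)
  have hk1 : 1 ≤ k := by
    by_contra h
    push_neg at h
    interval_cases k
    · rw [mem_degreeLT] at hp
      simp [Nat.cast_zero, Nat.lt_irrefl] at hp
      exact hp0 (by simpa [degree_eq_bot] using hp)
  have hzcard : (univ.filter fun x : {x : F // x ∉ B} => c x = 0).card ≤ k - 1 := by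
    have h1 : (univ.filter fun x : {x : F // x ∉ B} => c x = 0).card
        ≤ p.roots.toFinset.card := by
      apply Finset.card_le_card_of_injOn (fun x => x.1)
      · intro x hx
        simp only [mem_coe, mem_filter] at hx ⊢
        rw [Multiset.mem_toFinset, mem_roots hp0]
        show p.eval x.1 = 0
        rw [← hpc x]; exact hx.2
      · exact fun a _ b _ h => Subtype.ext h
    have h2 : p.roots.toFinset.card ≤ p.natDegree :=
      le_trans (Multiset.toFinset_card_le _) (Polynomial.card_roots' p)
    have h3 : p.natDegree < k := (natDegree_lt_iff_degree_lt hp0).mpr (mem_degreeLT.mp hp)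
    omega
  have hsum := Finset.card_filter_add_card_filter_not
    (s := (univ : Finset {x : F // x ∉ B})) (p := fun x => c x = 0)
  rw [Finset.card_univ] at hsum
  rw [hammingNorm_eq]
  have : (univ.filter fun x : {x : F // x ∉ B} => ¬ c x = 0)
      = (univ.filter fun i : {x : F // x ∉ B} => c i ≠ 0) := rfl
  rw [this] at hsum
  omega

lemma dual_small_eq_zero {B : Finset F} {m : ℕ} (hsm : B.card ≤ m)
    {c : {x : F // x ∉ B} → F} (hc : c ∈ dualCode (C2perpCode B m))
    (hw : hammingNorm c ≤ m - B.card) : c = 0 := by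
  by_contra h0
  obtain ⟨x0, hx0⟩ : ∃ x, c x ≠ 0 := by
    by_contra h; push_neg at h; exact h0 (funext h)
  set S : Finset F := (univ.filter fun x : {x : F // x ∉ B} => c x ≠ 0).image Subtype.val
    with hS
  have hx0S : x0.1 ∈ S := mem_image.mpr ⟨x0, mem_filter.mpr ⟨mem_univ _, hx0⟩, rfl⟩
  have hScard : S.card ≤ m - B.card := le_trans Finset.card_image_le hw
  set r : F[X] := Lagrange.basis S id x0.1 with hr
  have hinj : Set.InjOn (id : F → F) S := Function.injective_id.injOn
  have hrdeg : r.natDegree = S.card - 1 := Lagrange.natDegree_basis hinj hx0S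
  have hr0 : r ≠ 0 := Lagrange.basis_ne_zero hinj hx0S
  set p := ZB B * r with hpdef
  have hpmem : p ∈ degreeLT F m := by
    rw [mem_degreeLT, ← natDegree_lt_iff_degree_lt (mul_ne_zero (ZB_ne_zero B) hr0),
      natDegree_mul (ZB_ne_zero B) hr0, ZB_natDegree, hrdeg]
    have hS1 : 1 ≤ S.card := Finset.card_pos.mpr ⟨x0.1, hx0S⟩
    omega
  have hd : (fun x : {x : F // x ∉ B} => p.eval x.1) ∈ C2perpCode B m :=
    ⟨p, hpmem, fun b hb => by simp [hpdef, ZB_eval_zero hb], fun _ => rfl⟩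
  have hsum := hc _ hd
  rw [Finset.sum_eq_single x0] at hsum
  · have hne : p.eval x0.1 ≠ 0 := by
      rw [hpdef, eval_mul]
      refine mul_ne_zero (ZB_eval_ne_zero x0.2) ?_
      have h1 := Lagrange.eval_basis_self hinj hx0S
      simp only [id_eq] at h1
      rw [hr, h1]
      exact one_ne_zero
    exact (mul_ne_zero hx0 hne) hsum
  · intro b _ hb
    rcases eq_or_ne (c b) 0 with h | h
    · rw [h, zero_mul]
    · have hbS : b.1 ∈ S := mem_image.mpr ⟨b, mem_filter.mpr ⟨mem_univ _, h⟩, rfl⟩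
      have hrb : (Lagrange.basis S id x0.1).eval (id b.1) = 0 :=
        Lagrange.eval_basis_of_ne (fun he => hb (Subtype.ext he.symm)) hbS
      simp only [id_eq] at hrb
      simp [hpdef, hr, eval_mul, hrb]
  · intro h; exact absurd (mem_univ x0) h

end QRSaux

open QRSaux in
/-- The punctured quantum Reed–Solomon construction with `q = 2^l` (`l ≥ 3`),
`k = m = ⌊q/3⌋`, `s = q/4` yields a CSS qudit code with parameters
`[[3q/4, q/4, ⌊q/3⌋ - q/4 + 1]]_q`: the CSS condition `C2⊥ ⊆ C1` holds, the block
length `|M| = q - s = 3q/4`, the number of logical qudits is `k - m + s = q/4`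
(expressed via `|C1| = |C2⊥| · q^{q/4}`), and both the weight of any element of
`C1 \ C2⊥` and of any element of `C2 \ C1⊥` are at least
`min(q-k, m) - s + 1 = ⌊q/3⌋ - q/4 + 1`. -/
theorem stmt8 {F : Type*} [Field F] [Fintype F] [DecidableEq F]
    (l : ℕ) (hl : 3 ≤ l) (hcard : Fintype.card F = 2 ^ l)
    (B : Finset F) (hB : B.card = 2 ^ l / 4) :
    C2perpCode B (2 ^ l / 3) ⊆ C1code B (2 ^ l / 3) ∧
    Fintype.card {x : F // x ∉ B} = 3 * 2 ^ l / 4 ∧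
    Nat.card (C1code B (2 ^ l / 3)) =
      Nat.card (C2perpCode B (2 ^ l / 3)) * (2 ^ l) ^ (2 ^ l / 4) ∧
    (∀ c ∈ C1code B (2 ^ l / 3), c ∉ C2perpCode B (2 ^ l / 3) →
      2 ^ l / 3 - 2 ^ l / 4 + 1 ≤ hammingNorm c) ∧
    (∀ c ∈ dualCode (C2perpCode B (2 ^ l / 3)), c ∉ dualCode (C1code B (2 ^ l / 3)) →
      2 ^ l / 3 - 2 ^ l / 4 + 1 ≤ hammingNorm c) := by
  have h4 : (2 : ℕ) ^ l = 4 * 2 ^ (l - 2) := by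
    conv_lhs => rw [show l = (l - 2) + 2 by omega]
    rw [pow_add]; ring
  have h2l2 : 2 ≤ 2 ^ (l - 2) := by
    calc (2:ℕ) = 2 ^ 1 := rfl
    _ ≤ 2 ^ (l - 2) := Nat.pow_le_pow_right (by norm_num) (by omega)
  have hcardM : Fintype.card {x : F // x ∉ B} = 2 ^ l - 2 ^ l / 4 := by
    rw [Fintype.card_subtype_compl, hcard]
    congr 1
    rw [← hB]
    exact Fintype.card_coe B
  have hsk : 2 ^ l / 4 ≤ 2 ^ l / 3 := by omega
  have hkM : 2 ^ l / 3 ≤ Fintype.card {x : F // x ∉ B} := by omega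
  have hsm : B.card ≤ 2 ^ l / 3 := by omega
  refine ⟨?_, ?_, ?_, ?_, ?_⟩
  · rintro c ⟨p, hp, -, hc⟩
    exact ⟨p, hp, hc⟩
  · omega
  · rw [card_C1 hkM, card_C2perp hsm (by omega), hcard, ← pow_add]
    congr 1
    omega
  · intro c hc hnc
    have hc0 : c ≠ 0 := fun h => hnc (h ▸ zero_mem_C2perp B _)
    have := hammingNorm_C1 hc hc0
    omega
  · intro c hc hnc
    by_contra h
    push_neg at h
    have hz : c = 0 := dual_small_eq_zero hsm hc (by omega)
    refine hnc ?_
    rw [hz]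
    intro d hd
    simp [dualCode]
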